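/- Let F_n be the class of unweighted refined social poll instances on n agents whose social network graph has treewidth at most 1, with k candidates, in which the distinguished candidate c* is a possible winner. Then the canonical equivalence relation ∼_{F_n,0} on 0-boundaried instances (I₁ ∼ I₂ iff for all 0-boundaried instances H, I₁ ⊕ H ∈ F_n ⟺ I₂ ⊕ H ∈ F_n, where ⊕ is disjoint union) has at least ⌊n/k⌋^{k−1} equivalence classes. -/

import Mathlib

open scoped Classical
open Finset

/-- The set of neighbors of `x` (w.r.t. adjacency `adj`) that vote before `x`
in the voting order `ord` (smaller `ord`-value votes earlier). -/
noncomputable def prior {V : Type*} [Fintype V] (adj : V → V → Prop) (ord : V → ℕ) (x : V) :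
    Finset V :=
  Finset.univ.filter fun y => adj x y ∧ ord y < ord x

/-- Refined social poll model: `f` is the (unique) vote function arising from the
voting order `ord`: an agent `x` votes `c ∈ P x` if strictly more than half of her
previously-voting neighbors voted `c`, and otherwise votes her top choice `p1 x`. -/
def Consistent {V C : Type*} [Fintype V] (adj : V → V → Prop)
    (P : V → Finset C) (p1 : V → C) (ord : V → ℕ) (f : V → C) : Prop :=
  ∀ x : V,
    (∃ c ∈ P x,
        (2 * (((prior adj ord x).filter fun y => f y = c).card) > (prior adj ord x).card)
        ∧ f x = c)
    ∨ ((¬ ∃ c ∈ P x,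
          2 * (((prior adj ord x).filter fun y => f y = c).card) > (prior adj ord x).card)
        ∧ f x = p1 x)

/-- The score of candidate `c`: the number of agents voting for `c`. -/
noncomputable def score {V C : Type*} [Fintype V] (f : V → C) (c : C) : ℕ :=
  (Finset.univ.filter fun x => f x = c).card

/-- A (0-boundaried) unweighted refined social poll instance with candidate set
`Fin k`, where the distinguished candidate is `c* = 0`. -/
structure PollInst (k : ℕ) where
  V : Type
  [fin : Fintype V]
  adj : V → V → Prop
  P : V → Finset (Fin k)
  p1 : V → Fin k

attribute [instance] PollInst.fin

/-- The disjoint-union (`⊕`) of two 0-boundaried instances. -/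
def PollInst.disjUnion {k : ℕ} (I H : PollInst k) : PollInst k where
  V := I.V ⊕ H.V
  adj x y := match x, y with
    | .inl a, .inl b => I.adj a b
    | .inr a, .inr b => H.adj a b
    | _, _ => False
  P := Sum.elim I.P H.P
  p1 := Sum.elim I.p1 H.p1

/-- Membership in the class `F_n`: instances on `n` agents whose social network graph
has treewidth at most 1 (equivalently, is a forest) in which the distinguished
candidate `c* = 0` is a possible (co-)winner. -/
def InF {k : ℕ} (hk : 0 < k) (n : ℕ) (I : PollInst k) : Prop :=
  Fintype.card I.V = n ∧
  (SimpleGraph.fromRel I.adj).IsAcyclic ∧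
  ∃ (ord : I.V → ℕ) (f : I.V → Fin k),
    Function.Injective ord ∧ Consistent I.adj I.P I.p1 ord f ∧
    ∀ d : Fin k, score f d ≤ score f ⟨0, hk⟩

/-- The canonical equivalence relation `∼_{F_n,0}` on 0-boundaried instances. -/
def EqvF {k : ℕ} (hk : 0 < k) (n : ℕ) (I₁ I₂ : PollInst k) : Prop :=
  ∀ H : PollInst k, (InF hk n (I₁.disjUnion H) ↔ InF hk n (I₂.disjUnion H))

/-! ### Auxiliary constructions -/

/-- The edgeless instance with `t c` agents whose top choice is `c`. -/
noncomputable def cntInst (k : ℕ) (t : Fin k → ℕ) : PollInst k where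
  V := (c : Fin k) × Fin (t c)
  adj _ _ := False
  P _ := ∅
  p1 x := x.1

lemma score_sigma (k : ℕ) (t : Fin k → ℕ) (c : Fin k) :
    score (fun x : (d : Fin k) × Fin (t d) => x.1) c = t c := by
  classical
  have h1 : score (fun x : (d : Fin k) × Fin (t d) => x.1) c
      = Fintype.card {x : (d : Fin k) × Fin (t d) // x.1 = c} := by
    rw [Fintype.card_subtype]
    unfold score
    congr 1
    apply Finset.filter_congr_decidable
  rw [h1]
  refine (Fintype.card_congr ?_).trans (Fintype.card_fin (t c))
  exact { toFun := fun x => Fin.cast (congrArg t x.2) x.1.2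
          invFun := fun i => ⟨⟨c, i⟩, rfl⟩
          left_inv := by rintro ⟨⟨d, i⟩, rfl⟩; rfl
          right_inv := fun i => rfl }

lemma score_sum_elim {A B C : Type} [Fintype A] [Fintype B] (f : A → C) (g : B → C) (c : C) :
    score (Sum.elim f g) c = score f c + score g c := by
  classical
  unfold score
  rw [Finset.card_filter, Finset.card_filter, Finset.card_filter, Fintype.sum_sum_type]
  simp
  congr 1 <;> rw [Finset.card_filter] <;> apply Finset.sum_congr rfl <;> intro x _ <;> congr

lemma char (k n : ℕ) (hk : 0 < k) (s t : Fin k → ℕ) :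
    InF hk n ((cntInst k s).disjUnion (cntInst k t)) ↔
      ((∑ c, s c) + (∑ c, t c) = n ∧ ∀ d, s d + t d ≤ s ⟨0, hk⟩ + t ⟨0, hk⟩) := by
  classical
  set I := (cntInst k s).disjUnion (cntInst k t) with hI
  have hadj : ∀ x y, ¬ I.adj x y := by
    rintro (x|x) (y|y) h <;> exact h
  have hP : ∀ x, I.P x = ∅ := by rintro (x|x) <;> rfl
  have hprior : ∀ (ord : I.V → ℕ) (x : I.V), prior I.adj ord x = ∅ := by
    intro ord x
    apply Finset.filter_false_of_mem
    intro y _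
    exact fun hc => hadj x y hc.1
  have hcons : ∀ (ord : I.V → ℕ) (f : I.V → Fin k),
      Consistent I.adj I.P I.p1 ord f ↔ ∀ x, f x = I.p1 x := by
    intro ord f
    constructor
    · intro h x
      rcases h x with ⟨c, hc, _⟩ | ⟨_, hfx⟩
      · rw [hP] at hc; exact absurd hc (Finset.notMem_empty c)
      · exact hfx
    · intro h x
      right
      refine ⟨?_, h x⟩
      rintro ⟨c, hc, _⟩
      rw [hP] at hc; exact Finset.notMem_empty c hc
  have hscore : ∀ c, score I.p1 c = s c + t c := by
    intro c
    have : I.p1 = Sum.elim (fun x : (d : Fin k) × Fin (s d) => x.1)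
        (fun x : (d : Fin k) × Fin (t d) => x.1) := rfl
    erw [this, score_sum_elim, score_sigma, score_sigma]
  have hcard : Fintype.card I.V = (∑ c, s c) + (∑ c, t c) := by
    have : Fintype.card I.V =
        Fintype.card ((c : Fin k) × Fin (s c)) + Fintype.card ((c : Fin k) × Fin (t c)) :=
      Fintype.card_sum
    rw [this]
    simp [Fintype.card_sigma]
  have hacyc : (SimpleGraph.fromRel I.adj).IsAcyclic := by
    intro v c hc
    cases c with
    | nil => simp [SimpleGraph.Walk.isCycle_def] at hc
    | cons h p =>
      rcases (SimpleGraph.fromRel_adj _ _ _).mp h with ⟨-, h' | h'⟩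
      · exact hadj _ _ h'
      · exact hadj _ _ h'
  constructor
  · rintro ⟨h1, -, ord, f, -, hco, hwin⟩
    have hf : f = I.p1 := funext ((hcons ord f).mp hco)
    subst hf
    refine ⟨by rw [← hcard, h1], fun d => ?_⟩
    have := hwin d
    rwa [hscore, hscore] at this
  · rintro ⟨h1, h2⟩
    refine ⟨by rw [hcard, h1], hacyc, fun x => ((Fintype.equivFin I.V) x : ℕ), I.p1,
      ?_, (hcons _ _).mpr fun _ => rfl, fun d => ?_⟩
    · exact fun x y h => (Fintype.equivFin I.V).injective (Fin.val_injective h)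
    · rw [hscore, hscore]; exact h2 d

lemma dist1 (k' n m : ℕ) (hk : 0 < k'+1) (hm2 : 2 ≤ m) (hn : (k'+1) * m ≤ n)
    (a b : Fin k' → Fin m) (hS : (∑ l, (a l : ℕ)) ≠ ∑ l, (b l : ℕ)) :
    ∃ H : PollInst (k'+1),
      InF hk n ((cntInst (k'+1) (Fin.cons 0 fun l => ((a l : ℕ)))).disjUnion H) ∧
      ¬ InF hk n ((cntInst (k'+1) (Fin.cons 0 fun l => ((b l : ℕ)))).disjUnion H) := by
  classical
  set Sa := ∑ l, (a l : ℕ) with hSadef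
  have h0 : (⟨0, hk⟩ : Fin (k'+1)) = 0 := by ext; simp
  have hSa_le : Sa ≤ k' * (m - 1) := by
    have h := Finset.sum_le_card_nsmul Finset.univ (fun l => (a l : ℕ)) (m - 1)
      (fun l _ => by show (a l : ℕ) ≤ m - 1; have := (a l).isLt; omega)
    simpa [Finset.card_univ] using h
  have hlin : k' * (m - 1) + k' * 1 = k' * m := by
    rw [← Nat.mul_add]; congr 1; omega
  have hn' : k' * m + m ≤ n := by
    have : (k'+1) * m = k' * m + m := by ring
    omega
  set t₁ : Fin (k'+1) → ℕ := fun c => if c = 0 then n - Sa else 0 with ht₁def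
  have hsum1 : ∑ c, t₁ c = n - Sa := by
    simp [ht₁def, Finset.sum_ite_eq']
  have ht0 : t₁ 0 = n - Sa := by simp [ht₁def]
  have htl : ∀ l : Fin k', t₁ (Fin.succ l) = 0 := by
    intro l; simp [ht₁def, Fin.succ_ne_zero]
  refine ⟨cntInst (k'+1) t₁, ?_, ?_⟩
  · rw [char]
    constructor
    · rw [Fin.sum_cons, hsum1]; omega
    · intro d
      simp only [h0, Fin.cons_zero, ht0]
      refine Fin.cases ?_ ?_ d
      · simp [ht0]
      · intro l
        rw [Fin.cons_succ, htl]
        have := (a l).isLt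
        omega
  · rw [char]
    rintro ⟨hc, -⟩
    rw [Fin.sum_cons, hsum1] at hc
    omega

lemma dist2 (k' n m : ℕ) (hk : 0 < k'+1) (hm2 : 2 ≤ m) (hn : (k'+1) * m ≤ n)
    (a b : Fin k' → Fin m) (hsum : (∑ l, (a l : ℕ)) = ∑ l, (b l : ℕ))
    (j0 : Fin k') (hj : (a j0 : ℕ) < (b j0 : ℕ)) :
    ∃ H : PollInst (k'+1),
      InF hk n ((cntInst (k'+1) (Fin.cons 0 fun l => ((a l : ℕ)))).disjUnion H) ∧
      ¬ InF hk n ((cntInst (k'+1) (Fin.cons 0 fun l => ((b l : ℕ)))).disjUnion H) := by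
  classical
  by_cases hex : ∃ l0 : Fin k', l0 ≠ j0
  case neg =>
    exfalso
    push_neg at hex
    have huniv : (Finset.univ : Finset (Fin k')) = {j0} := by
      ext l; simp [hex l]
    rw [huniv] at hsum
    simp at hsum
    omega
  obtain ⟨l0, hl0⟩ := hex
  have h0 : (⟨0, hk⟩ : Fin (k'+1)) = 0 := by ext; simp
  set Sa := ∑ l, (a l : ℕ) with hSadef
  have hk2 : 2 ≤ k' := by
    have h := Fintype.one_lt_card_iff_nontrivial.mpr ⟨⟨l0, j0, hl0⟩⟩
    simp at h; omega
  have hS' : (a j0 : ℕ) + ∑ l ∈ Finset.univ.erase j0, (a l : ℕ) = ∑ l, (a l : ℕ) :=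
    Finset.add_sum_erase _ (fun l => ((a l : ℕ))) (Finset.mem_univ j0)
  rw [← hSadef] at hS'
  have hS'le : (∑ l ∈ Finset.univ.erase j0, (a l : ℕ)) ≤ (k' - 1) * (m - 1) := by
    have h := Finset.sum_le_card_nsmul (Finset.univ.erase j0) (fun l => (a l : ℕ)) (m - 1)
      (fun l _ => by show (a l : ℕ) ≤ m - 1; have := (a l).isLt; omega)
    simpa [Finset.card_erase_of_mem, Finset.card_univ] using h
  have hprod : (k' - 1) * (m - 1) + (k' + 2 * m) = (k'+1) * m + 1 := by
    obtain ⟨k2, rfl⟩ : ∃ k2, k' = k2 + 2 := ⟨k' - 2, by omega⟩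
    obtain ⟨m2, rfl⟩ : ∃ m2, m = m2 + 2 := ⟨m - 2, by omega⟩
    have e1 : k2 + 2 - 1 = k2 + 1 := rfl
    have e2 : m2 + 2 - 1 = m2 + 1 := rfl
    rw [e1, e2]; ring
  have hαm : (a j0 : ℕ) < m := (a j0).isLt
  have hβm : (b j0 : ℕ) < m := (b j0).isLt
  have hal0 : (a l0 : ℕ) < m := (a l0).isLt
  obtain ⟨T, δ, hTδ, hδ⟩ : ∃ T δ, 2 * T + δ = (a j0 : ℕ) + (n - Sa) ∧ δ ≤ 1 :=
    ⟨((a j0 : ℕ) + (n - Sa)) / 2, ((a j0 : ℕ) + (n - Sa)) % 2, by omega, by omega⟩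
  set t₂ : Fin (k'+1) → ℕ := fun c =>
    (if c = 0 then T else 0) + (if c = Fin.succ j0 then (n - Sa) - T - δ else 0)
      + (if c = Fin.succ l0 then δ else 0) with ht₂def
  have ht0 : t₂ 0 = T := by
    simp [ht₂def, (Fin.succ_ne_zero j0).symm, (Fin.succ_ne_zero l0).symm]
  have htj : t₂ (Fin.succ j0) = (n - Sa) - T - δ := by
    simp [ht₂def, Fin.succ_ne_zero, Fin.succ_inj, Ne.symm hl0,
      fun h => hl0 (Fin.succ_inj.mp h)]
  have htl0 : t₂ (Fin.succ l0) = δ := by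
    simp [ht₂def, Fin.succ_ne_zero, Fin.succ_inj, hl0]
  have htl : ∀ l : Fin k', l ≠ j0 → l ≠ l0 → t₂ (Fin.succ l) = 0 := by
    intro l h1 h2
    simp [ht₂def, Fin.succ_ne_zero, Fin.succ_inj, h1, h2]
  have hsum2 : ∑ c, t₂ c = T + ((n - Sa) - T - δ) + δ := by
    rw [ht₂def]
    rw [Finset.sum_add_distrib, Finset.sum_add_distrib]
    simp [Finset.sum_ite_eq']
  -- key linear facts
  have key : Sa + m + k' ≤ n ∧ 2 * m + 1 ≤ (a j0 : ℕ) + (n - Sa) := by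
    constructor <;> omega
  refine ⟨cntInst (k'+1) t₂, ?_, ?_⟩
  · rw [char]
    constructor
    · rw [Fin.sum_cons, hsum2]; omega
    · intro d
      simp only [h0, Fin.cons_zero, ht0]
      refine Fin.cases ?_ ?_ d
      · simp [ht0]
      · intro l
        rw [Fin.cons_succ]
        by_cases hlj : l = j0
        · subst hlj; rw [htj]; omega
        · by_cases hll : l = l0
          · subst hll; rw [htl0]; omega
          · rw [htl l hlj hll]; omega
  · rw [char]
    rintro ⟨-, hcond⟩
    have hx := hcond (Fin.succ j0)
    simp only [h0, Fin.cons_zero, ht0, Fin.cons_succ, htj] at hx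
    omega


/-- The equivalence relation `∼_{F_n,0}` has at least `⌊n/k⌋^(k-1)` equivalence
classes: there are `⌊n/k⌋^(k-1)` pairwise inequivalent 0-boundaried instances. -/
theorem index_lower_bound (k n : ℕ) (hk : 0 < k) :
    ∃ L : Fin ((n / k) ^ (k - 1)) → PollInst k,
      ∀ i j, i ≠ j → ¬ EqvF hk n (L i) (L j) := by
  cases k with
  | zero => exact absurd hk (by omega)
  | succ k' =>
    rw [Nat.succ_sub_one]
    set m := n / (k' + 1) with hmdef
    refine ⟨fun v => cntInst (k'+1)
      (Fin.cons 0 fun l => (((finFunctionFinEquiv.symm v : Fin k' → Fin m) l : ℕ))), ?_⟩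
    intro i j hij hEq
    set a : Fin k' → Fin m := finFunctionFinEquiv.symm i with hadef
    set b : Fin k' → Fin m := finFunctionFinEquiv.symm j with hbdef
    have hab : a ≠ b := fun h => hij (by
      have := congrArg finFunctionFinEquiv h
      simpa [hadef, hbdef] using this)
    have hpow : 2 ≤ m ^ k' := by
      have hi := i.isLt
      have hj' := j.isLt
      have hne : (i : ℕ) ≠ (j : ℕ) := fun hh => hij (Fin.ext hh)
      omega
    have hm2 : 2 ≤ m := by
      by_contra h
      have h1 : m ^ k' ≤ 1 ^ k' := Nat.pow_le_pow_left (by omega) k'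
      rw [one_pow] at h1
      omega
    have hn : (k' + 1) * m ≤ n := by
      rw [hmdef, Nat.mul_comm]
      exact Nat.div_mul_le_self n (k' + 1)
    by_cases hS : (∑ l, (a l : ℕ)) = ∑ l, (b l : ℕ)
    · have hex : ∃ j0, (a j0 : ℕ) ≠ (b j0 : ℕ) := by
        by_contra h
        push_neg at h
        exact hab (funext fun l => Fin.ext (h l))
      obtain ⟨j0, hj0⟩ := hex
      rcases Nat.lt_or_ge (a j0 : ℕ) (b j0 : ℕ) with h | h
      · obtain ⟨H, h1, h2⟩ := dist2 k' n m hk hm2 hn a b hS j0 h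
        exact h2 ((hEq H).mp h1)
      · have h' : (b j0 : ℕ) < (a j0 : ℕ) := by omega
        obtain ⟨H, h1, h2⟩ := dist2 k' n m hk hm2 hn b a hS.symm j0 h'
        exact h2 ((hEq H).mpr h1)
    · obtain ⟨H, h1, h2⟩ := dist1 k' n m hk hm2 hn a b hS
      exact h2 ((hEq H).mp h1)
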